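/- Under the noisy network model with two independent replicate observations (Y_{i,j}) and (Y_{i,j,*}) of the same true adjacency matrix A, the statistic û₂ = (2N)^{-1} Σ_{i<j} |Y_{i,j,*} − Y_{i,j}| satisfies E(û₂) = (1−δ)α(1−α) + δβ(1−β), where N = p(p−1)/2 and δ = N^{-1} Σ_{i<j} A_{i,j}. -/

import Mathlib

open MeasureTheory Finset

/-- The Bernoulli mass function on `{0,1}`: mass `q` at `1` and `1 − q` at `0`. -/
noncomputable def bernMass (q a : ℝ) : ℝ := if a = 1 then q else 1 - q

/-- Under the noisy network model with two independent replicate observations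
`Y` and `Y*` of the same true adjacency matrix `A`, the statistic
`û₂ = (2N)⁻¹ ∑_{i<j} |Y*ᵢⱼ − Yᵢⱼ|` has expectation
`(1−δ)α(1−α) + δβ(1−β)`, where `N = p(p−1)/2` and `δ = N⁻¹ ∑_{i<j} Aᵢⱼ`. -/
theorem expectation_u2hat
    {Ω : Type*} [MeasurableSpace Ω] (μ : Measure Ω) [IsProbabilityMeasure μ]
    (p : ℕ) (hp : 2 ≤ p)
    (A : Fin p → Fin p → ℝ)
    (hA01 : ∀ i j, A i j = 0 ∨ A i j = 1)
    (hAsym : ∀ i j, A i j = A j i) (hAdiag : ∀ i, A i i = 0)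
    (α β : ℝ) (hα0 : 0 ≤ α) (hα1 : α ≤ 1) (hβ0 : 0 ≤ β) (hβ1 : β ≤ 1)
    (hαβ : α + β ≤ 1)
    (Y Ystar : Fin p → Fin p → Ω → ℝ)
    (hYmeas : ∀ i j, Measurable (Y i j)) (hYstarmeas : ∀ i j, Measurable (Ystar i j))
    (hY01 : ∀ i j ω, Y i j ω = 0 ∨ Y i j ω = 1)
    (hYstar01 : ∀ i j ω, Ystar i j ω = 0 ∨ Ystar i j ω = 1)
    (hjoint : ∀ i j, i < j → ∀ a b : ℝ, (a = 0 ∨ a = 1) → (b = 0 ∨ b = 1) →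
      μ {ω | Y i j ω = a ∧ Ystar i j ω = b} =
        ENNReal.ofReal (bernMass (if A i j = 1 then 1 - β else α) a *
          bernMass (if A i j = 1 then 1 - β else α) b))
    (N δ : ℝ)
    (hN : N = (p : ℝ) * ((p : ℝ) - 1) / 2)
    (hδ : δ = N⁻¹ * ∑ q ∈ univ.filter (fun q : Fin p × Fin p => q.1 < q.2), A q.1 q.2) :
    ∫ ω, (2 * N)⁻¹ * ∑ q ∈ univ.filter (fun q : Fin p × Fin p => q.1 < q.2),
        |Ystar q.1 q.2 ω - Y q.1 q.2 ω| ∂μ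
      = (1 - δ) * α * (1 - α) + δ * β * (1 - β) := by
  classical
  set P := univ.filter (fun q : Fin p × Fin p => q.1 < q.2) with hP
  -- the discrepancy set for a pair
  set S : Fin p → Fin p → Set Ω := fun i j =>
    {ω | Y i j ω = 0 ∧ Ystar i j ω = 1} ∪ {ω | Y i j ω = 1 ∧ Ystar i j ω = 0} with hS
  have hm1 : ∀ i j, MeasurableSet {ω | Y i j ω = 0 ∧ Ystar i j ω = 1} := fun i j =>
    (hYmeas i j (measurableSet_singleton 0)).inter (hYstarmeas i j (measurableSet_singleton 1))
  have hm2 : ∀ i j, MeasurableSet {ω | Y i j ω = 1 ∧ Ystar i j ω = 0} := fun i j =>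
    (hYmeas i j (measurableSet_singleton 1)).inter (hYstarmeas i j (measurableSet_singleton 0))
  have hmS : ∀ i j, MeasurableSet (S i j) := fun i j => (hm1 i j).union (hm2 i j)
  have key : ∀ i j : Fin p,
      (fun ω => |Ystar i j ω - Y i j ω|) = (S i j).indicator (1 : Ω → ℝ) := by
    intro i j; funext ω
    rcases hY01 i j ω with h1 | h1 <;> rcases hYstar01 i j ω with h2 | h2 <;>
      simp [Set.indicator, hS, h1, h2] <;> norm_num
  have hintg : ∀ i j : Fin p, Integrable (fun ω => |Ystar i j ω - Y i j ω|) μ := by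
    intro i j; rw [key i j]
    exact (integrable_const (1:ℝ)).indicator (hmS i j)
  have hint : ∀ i j : Fin p, i < j →
      ∫ ω, |Ystar i j ω - Y i j ω| ∂μ =
        2 * (if A i j = 1 then β * (1 - β) else α * (1 - α)) := by
    intro i j hij
    have hdisj : Disjoint {ω | Y i j ω = 0 ∧ Ystar i j ω = 1}
        {ω | Y i j ω = 1 ∧ Ystar i j ω = 0} := by
      rw [Set.disjoint_left]
      rintro ω ⟨h1, -⟩ ⟨h2, -⟩
      norm_num [h1] at h2
    rw [key i j]
    rw [MeasureTheory.integral_indicator_one (hmS i j)]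
    rw [hS]
    simp only []
    rw [measureReal_def]
    rw [measure_union hdisj (hm2 i j)]
    rw [hjoint i j hij 0 1 (Or.inl rfl) (Or.inr rfl),
        hjoint i j hij 1 0 (Or.inr rfl) (Or.inl rfl)]
    have b0 : ∀ x : ℝ, bernMass x 0 = 1 - x := by intro x; simp [bernMass]
    have b1 : ∀ x : ℝ, bernMass x 1 = x := by intro x; simp [bernMass]
    simp only [b0, b1]
    split_ifs with hA
    · rw [ENNReal.toReal_add ENNReal.ofReal_ne_top ENNReal.ofReal_ne_top,
        ENNReal.toReal_ofReal (by nlinarith), ENNReal.toReal_ofReal (by nlinarith)]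
      ring
    · rw [ENNReal.toReal_add ENNReal.ofReal_ne_top ENNReal.ofReal_ne_top,
        ENNReal.toReal_ofReal (by nlinarith), ENNReal.toReal_ofReal (by nlinarith)]
      ring
  -- cardinality of the index set
  have hcard2 : P.card * 2 = p * (p - 1) := by
    have h1 : P.card = ∑ j : Fin p, (j : ℕ) := by
      rw [hP, Finset.card_filter, Fintype.sum_prod_type, Finset.sum_comm]
      refine Finset.sum_congr rfl fun j _ => ?_
      rw [← Finset.card_filter]
      rw [show (univ.filter (fun i : Fin p => i < j)) = Iio j by ext i; simp, Fin.card_Iio]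
    rw [h1, Fin.sum_univ_eq_sum_range (fun i => i) p, Finset.sum_range_id_mul_two]
  have hNpos : 0 < N := by
    rw [hN]
    have h2 : (2:ℝ) ≤ (p:ℝ) := by exact_mod_cast hp
    nlinarith
  have hcard : (P.card : ℝ) = N := by
    have hp1 : (1:ℕ) ≤ p := by omega
    have h2 : ((P.card * 2 : ℕ) : ℝ) = ((p * (p - 1) : ℕ) : ℝ) := by rw [hcard2]
    push_cast [Nat.cast_sub hp1] at h2
    rw [hN]; linarith
  -- main computation
  rw [MeasureTheory.integral_const_mul]
  rw [integral_finset_sum P (fun s _ => hintg s.1 s.2)]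
  rw [Finset.sum_congr rfl (fun s hs => hint s.1 s.2 (by
    rw [hP] at hs; exact (Finset.mem_filter.mp hs).2))]
  have hterm : ∀ s : Fin p × Fin p, (2 : ℝ) * (if A s.1 s.2 = 1 then β * (1 - β) else α * (1 - α))
      = 2 * (A s.1 s.2 * (β * (1 - β)) + (1 - A s.1 s.2) * (α * (1 - α))) := by
    intro s; rcases hA01 s.1 s.2 with h | h <;> simp [h]
  rw [Finset.sum_congr rfl (fun s _ => hterm s)]
  have hsum : ∑ s ∈ P, (2 : ℝ) * (A s.1 s.2 * (β * (1 - β)) + (1 - A s.1 s.2) * (α * (1 - α)))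
      = 2 * ((∑ s ∈ P, A s.1 s.2) * (β * (1 - β)) +
        ((P.card : ℝ) - ∑ s ∈ P, A s.1 s.2) * (α * (1 - α))) := by
    rw [← Finset.mul_sum, Finset.sum_add_distrib, ← Finset.sum_mul, ← Finset.sum_mul,
      Finset.sum_sub_distrib, Finset.sum_const, nsmul_eq_mul, mul_one]
  rw [hsum, hcard]
  rw [hδ]
  have hNne : N ≠ 0 := ne_of_gt hNpos
  field_simp
  ring
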